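/- Fix γ > 1. The mappings between conservative and entropy variables are mutually inverse on the admissible set: for every u = (ρ, m, E) ∈ A, letting v = (v₁, v₂, v₃, v₄) = v(u) with v₁ = (ρe·(γ+1−s) − E)/(ρe), v₂ = u₁/e, v₃ = u₂/e, v₄ = −1/e, and defining s̃(v) = γ − v₁ + (v₂² + v₃²)/(2v₄) and (ρe)(v) = ((γ−1)/(−v₄)^γ)^{1/(γ−1)} · exp(−s̃(v)/(γ−1)), one has u(v(u)) = u, where u(v) := (−(ρe)(v)·v₄, (ρe)(v)·v₂, (ρe)(v)·v₃, (ρe)(v)·(1 − (v₂² + v₃²)/(2v₄))). -/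

import Mathlib

/-- States of the 2D compressible flow equations: `u = (ρ, m, E)`. -/
abbrev State : Type := ℝ × EuclideanSpace ℝ (Fin 2) × ℝ

/-- The internal energy `ρe(u) = E - ‖m‖²/(2ρ)`. -/
noncomputable def internalEnergy (u : State) : ℝ :=
  u.2.2 - ‖u.2.1‖ ^ 2 / (2 * u.1)

/-- The admissible set `A = {u | ρ > 0 ∧ ρe(u) > 0}`. -/
noncomputable def admissibleSet : Set State :=
  {u | 0 < u.1 ∧ 0 < internalEnergy u}

/-- The conservative-to-entropy-variable map followed by the
entropy-to-conservative-variable map is the identity on the admissible set. -/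
theorem conservative_entropy_roundtrip (γ : ℝ) (hγ : 1 < γ) (u : State)
    (hu : u ∈ admissibleSet) :
    let ρ := u.1
    let m := u.2.1
    let E := u.2.2
    -- specific internal energy, physical entropy
    let e := internalEnergy u / ρ
    let s := Real.log ((γ - 1) * internalEnergy u / ρ ^ γ)
    -- entropy variables v(u)
    let v₁ := (internalEnergy u * (γ + 1 - s) - E) / internalEnergy u
    let v₂ := (m 0 / ρ) / e
    let v₃ := (m 1 / ρ) / e
    let v₄ := -(1 / e)
    -- physical entropy and internal energy expressed in entropy variables
    let s' := γ - v₁ + (v₂ ^ 2 + v₃ ^ 2) / (2 * v₄)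
    let ρe' := ((γ - 1) / (-v₄) ^ γ) ^ (1 / (γ - 1)) * Real.exp (-(s' / (γ - 1)))
    -- the conservative variables recovered from the entropy variables
    ((-(ρe' * v₄), (WithLp.equiv 2 (Fin 2 → ℝ)).symm ![ρe' * v₂, ρe' * v₃],
      ρe' * (1 - (v₂ ^ 2 + v₃ ^ 2) / (2 * v₄))) : State) = u := by
  obtain ⟨hρ, hε⟩ := hu
  intro ρ m E e s v₁ v₂ v₃ v₄ s' ρe'
  set ε := internalEnergy u with hεdef
  have hρ0 : (ρ : ℝ) ≠ 0 := ne_of_gt hρ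
  have hε0 : (ε : ℝ) ≠ 0 := ne_of_gt hε
  have hγ1 : γ - 1 ≠ 0 := sub_ne_zero.mpr (ne_of_gt hγ)
  have he : e = ε / ρ := rfl
  have he0 : e ≠ 0 := by rw [he]; exact div_ne_zero hε0 hρ0
  have hv₂ : v₂ = m 0 / ε := by
    show (m 0 / ρ) / e = _; rw [he]; field_simp
  have hv₃ : v₃ = m 1 / ε := by
    show (m 1 / ρ) / e = _; rw [he]; field_simp
  have hv₄ : v₄ = -(ρ / ε) := by
    show -(1 / e) = _; rw [he]; field_simp
  have hnorm : ‖m‖ ^ 2 = m 0 ^ 2 + m 1 ^ 2 := by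
    rw [EuclideanSpace.norm_eq, Real.sq_sqrt (by positivity)]
    simp [Fin.sum_univ_two]
  have hεeq : ε = E - (m 0 ^ 2 + m 1 ^ 2) / (2 * ρ) := by
    rw [hεdef, internalEnergy, hnorm]
  have hkin : (v₂ ^ 2 + v₃ ^ 2) / (2 * v₄) = 1 - E / ε := by
    rw [hv₂, hv₃, hv₄]
    have : m 0 ^ 2 + m 1 ^ 2 = 2 * ρ * (E - ε) := by
      rw [hεeq]; field_simp; ring
    field_simp
    nlinarith [this]
  have hs' : s' = s := by
    show γ - v₁ + (v₂ ^ 2 + v₃ ^ 2) / (2 * v₄) = s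
    rw [hkin]
    show γ - (ε * (γ + 1 - s) - E) / ε + (1 - E / ε) = s
    field_simp
    ring
  have hρe' : ρe' = ε := by
    show ((γ - 1) / (-v₄) ^ γ) ^ (1 / (γ - 1)) * Real.exp (-(s' / (γ - 1))) = ε
    rw [hs', hv₄, neg_neg]
    have hA : (0:ℝ) < (γ - 1) * ε / ρ ^ γ := by
      apply div_pos (mul_pos (by linarith) hε) (Real.rpow_pos_of_pos hρ γ)
    have hexp : Real.exp (-(s / (γ - 1)))
        = ((γ - 1) * ε / ρ ^ γ) ^ (-(1 / (γ - 1))) := by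
      rw [Real.rpow_def_of_pos hA]
      show Real.exp (-(Real.log ((γ - 1) * ε / ρ ^ γ) / (γ - 1))) = _
      ring_nf
    rw [hexp]
    have hdiv : (ρ / ε) ^ γ = ρ ^ γ / ε ^ γ :=
      Real.div_rpow (le_of_lt hρ) (le_of_lt hε) γ
    rw [hdiv]
    have hB : (γ - 1) / (ρ ^ γ / ε ^ γ) = (γ - 1) * ε ^ γ / ρ ^ γ := by
      rw [div_div_eq_mul_div]
    rw [hB, Real.rpow_neg (le_of_lt hA), ← div_eq_mul_inv,
      ← Real.div_rpow (div_nonneg (mul_nonneg (by linarith) (Real.rpow_pos_of_pos hε γ).le) (Real.rpow_pos_of_pos hρ γ).le) (le_of_lt hA)]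
    have hC : (γ - 1) * ε ^ γ / ρ ^ γ / ((γ - 1) * ε / ρ ^ γ) = ε ^ (γ - 1) := by
      have h1 : ε ^ (γ - 1) = ε ^ γ / ε := by
        rw [Real.rpow_sub hε, Real.rpow_one]
      rw [h1]
      have hR : (ρ : ℝ) ^ γ ≠ 0 := ne_of_gt (Real.rpow_pos_of_pos hρ γ)
      field_simp
    rw [hC, ← Real.rpow_mul (le_of_lt hε), mul_one_div_cancel hγ1, Real.rpow_one]
  refine Prod.ext ?_ (Prod.ext ?_ ?_)
  · show -(ρe' * v₄) = ρ
    rw [hρe', hv₄]; field_simp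
  · show (WithLp.equiv 2 (Fin 2 → ℝ)).symm ![ρe' * v₂, ρe' * v₃] = m
    ext i
    fin_cases i <;> simp [hρe', hv₂, hv₃] <;> field_simp
  · show ρe' * (1 - (v₂ ^ 2 + v₃ ^ 2) / (2 * v₄)) = E
    rw [hρe', hkin]; field_simp; ring
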